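/- (Strictness in Theorem 2(b)) Under the setting of Theorem 2(b), if there exists an assignment s ∈ Ω with P(s) > 0 and 0 < H(s) < M, then the inequality is strict: for every N ≥ 1, the mean squared error of the Rao-Blackwell estimator θ̂^rb is strictly smaller than the mean squared error of the standard estimator θ̂, where both are computed with respect to the N-fold product distribution P^N on Ω^N and the true marginal θ := Σ_{s : s ∘ X̂ = x̂} P(s). -/
import Mathlib


open scoped Classical
open Finset

/-- Action of a permutation of `Fin n` on an assignment `s : Fin n → V`:
`(g • s) i := s (g⁻¹ i)`. -/
def permAct {n : ℕ} {V : Type*} (g : Equiv.Perm (Fin n)) (s : Fin n → V) : Fin n → V :=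
  fun i => s (g⁻¹ i)

/-- Action of a permutation of `Fin n` on a tuple of indices `X : Fin k → Fin n`:
`(g • X) j := g (X j)`. -/
def tupleAct {n k : ℕ} (g : Equiv.Perm (Fin n)) (X : Fin k → Fin n) : Fin k → Fin n :=
  fun j => g (X j)

/-- The `G`-orbit of a tuple of indices, as a finset. -/
noncomputable def tupleOrbit {n k : ℕ} (G : Subgroup (Equiv.Perm (Fin n)))
    (X : Fin k → Fin n) : Finset (Fin k → Fin n) :=
  Finset.univ.filter (fun A => ∃ g ∈ G, tupleAct g X = A)

/-- The orbit Hamming weight of `s` w.r.t. the marginal assignment `X̂ = x̂`: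
the number of tuples `A` in the `G`-orbit of `X̂` with `s ∘ A = x̂`. -/
noncomputable def orbitHammingWeight {n k : ℕ} {V : Type*} [Fintype V] [DecidableEq V]
    (G : Subgroup (Equiv.Perm (Fin n))) (X : Fin k → Fin n) (xhat : Fin k → V)
    (s : Fin n → V) : ℕ :=
  ((tupleOrbit G X).filter (fun A => s ∘ A = xhat)).card


lemma sum_prod_eq {Ω : Type*} [Fintype Ω] {N : ℕ} (Q : Fin N → Ω → ℝ) :
    ∑ ss : Fin N → Ω, ∏ l, Q l (ss l) = ∏ l, ∑ s, Q l s := by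
  rw [Finset.prod_univ_sum, Fintype.piFinset_univ]

lemma pair_moment {Ω : Type*} [Fintype Ω] {N : ℕ} (P : Ω → ℝ)
    (hP1 : ∑ s, P s = 1) (h₁ h₂ : Ω → ℝ) (i j : Fin N) (hij : i ≠ j) :
    ∑ ss : Fin N → Ω, (∏ l, P (ss l)) * (h₁ (ss i) * h₂ (ss j)) =
      (∑ s, P s * h₁ s) * (∑ s, P s * h₂ s) := by
  have key : ∀ ss : Fin N → Ω,
      (∏ l, P (ss l)) * (h₁ (ss i) * h₂ (ss j)) =
        ∏ l, (P (ss l) * ((if l = i then h₁ (ss l) else 1) * (if l = j then h₂ (ss l) else 1))) := by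
    intro ss
    rw [Finset.prod_mul_distrib, Finset.prod_mul_distrib,
      Finset.prod_ite_eq' Finset.univ i (fun l => h₁ (ss l)),
      Finset.prod_ite_eq' Finset.univ j (fun l => h₂ (ss l))]
    simp [mul_assoc]
  rw [Finset.sum_congr rfl (fun ss _ => key ss),
    sum_prod_eq (fun l s => P s * ((if l = i then h₁ s else 1) * (if l = j then h₂ s else 1)))]
  have hfac : ∀ l : Fin N,
      (∑ s, P s * ((if l = i then h₁ s else 1) * (if l = j then h₂ s else 1))) =
        (if l = i then ∑ s, P s * h₁ s else 1) * (if l = j then ∑ s, P s * h₂ s else 1) := by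
    intro l
    by_cases h1 : l = i
    · subst h1
      simp [hij, hP1]
    · by_cases h2 : l = j <;> simp [h1, h2, Ne.symm hij, hP1]
  rw [Finset.prod_congr rfl (fun l _ => hfac l), Finset.prod_mul_distrib,
    Finset.prod_ite_eq' Finset.univ i (fun _ => ∑ s, P s * h₁ s),
    Finset.prod_ite_eq' Finset.univ j (fun _ => ∑ s, P s * h₂ s)]
  simp

lemma single_moment {Ω : Type*} [Fintype Ω] {N : ℕ} (P : Ω → ℝ)
    (hP1 : ∑ s, P s = 1) (h : Ω → ℝ) (i : Fin N) :
    ∑ ss : Fin N → Ω, (∏ l, P (ss l)) * h (ss i) = ∑ s, P s * h s := by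
  have key : ∀ ss : Fin N → Ω,
      (∏ l, P (ss l)) * h (ss i) =
        ∏ l, (P (ss l) * (if l = i then h (ss l) else 1)) := by
    intro ss
    rw [Finset.prod_mul_distrib, Finset.prod_ite_eq' Finset.univ i (fun l => h (ss l))]
    simp
  rw [Finset.sum_congr rfl (fun ss _ => key ss),
    sum_prod_eq (fun l s => P s * (if l = i then h s else 1))]
  have hfac : ∀ l : Fin N,
      (∑ s, P s * (if l = i then h s else 1)) = (if l = i then ∑ s, P s * h s else 1) := by
    intro l
    by_cases h1 : l = i <;> simp [h1, hP1]
  rw [Finset.prod_congr rfl (fun l _ => hfac l),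
    Finset.prod_ite_eq' Finset.univ i (fun _ => ∑ s, P s * h s)]
  simp

set_option linter.unusedSectionVars false in
lemma mse_formula {Ω : Type*} [Fintype Ω] {N : ℕ} (hN : 1 ≤ N) (P : Ω → ℝ) (hP1 : ∑ s, P s = 1) (h : Ω → ℝ) :
    ∑ ss : Fin N → Ω, (∏ l, P (ss l)) * ((1 / (N : ℝ)) * (∑ i, h (ss i)) - (∑ s, P s * h s)) ^ 2
      = (1 / (N : ℝ)) * ((∑ s, P s * h s ^ 2) - (∑ s, P s * h s) ^ 2) := by
  have hN0 : (N : ℝ) ≠ 0 := by positivity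
  set θ : ℝ := ∑ s, P s * h s with hθ
  set E2 : ℝ := ∑ s, P s * h s ^ 2 with hE2
  have T0 : ∑ ss : Fin N → Ω, (∏ l, P (ss l)) = 1 := by
    rw [sum_prod_eq (fun _ s => P s)]
    simp [hP1]
  have T1 : ∑ ss : Fin N → Ω, (∏ l, P (ss l)) * (∑ i, h (ss i)) = (N : ℝ) * θ := by
    calc ∑ ss : Fin N → Ω, (∏ l, P (ss l)) * (∑ i, h (ss i))
        = ∑ ss : Fin N → Ω, ∑ i, (∏ l, P (ss l)) * h (ss i) := by
          simp [Finset.mul_sum]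
      _ = ∑ i : Fin N, ∑ ss : Fin N → Ω, (∏ l, P (ss l)) * h (ss i) := Finset.sum_comm
      _ = ∑ i : Fin N, θ := by
          refine Finset.sum_congr rfl fun i _ => ?_
          exact single_moment P hP1 h i
      _ = (N : ℝ) * θ := by simp [mul_comm]
  have T2 : ∑ ss : Fin N → Ω, (∏ l, P (ss l)) * (∑ i, h (ss i)) ^ 2
      = (N : ℝ) * E2 + ((N : ℝ) ^ 2 - N) * θ ^ 2 := by
    have step1 : ∑ ss : Fin N → Ω, (∏ l, P (ss l)) * (∑ i, h (ss i)) ^ 2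
        = ∑ i : Fin N, ∑ j : Fin N, ∑ ss : Fin N → Ω, (∏ l, P (ss l)) * (h (ss i) * h (ss j)) := by
      have : ∀ ss : Fin N → Ω, (∏ l, P (ss l)) * (∑ i, h (ss i)) ^ 2
          = ∑ i : Fin N, ∑ j : Fin N, (∏ l, P (ss l)) * (h (ss i) * h (ss j)) := by
        intro ss
        rw [sq, Finset.sum_mul_sum]
        simp [Finset.mul_sum]
      rw [Finset.sum_congr rfl fun ss _ => this ss]
      rw [Finset.sum_comm]
      refine Finset.sum_congr rfl fun i _ => Finset.sum_comm
    have inner : ∀ i : Fin N, ∑ j : Fin N, ∑ ss : Fin N → Ω, (∏ l, P (ss l)) * (h (ss i) * h (ss j))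
        = E2 + ((N : ℝ) - 1) * θ ^ 2 := by
      intro i
      have diag : ∑ ss : Fin N → Ω, (∏ l, P (ss l)) * (h (ss i) * h (ss i)) = E2 := by
        have := single_moment P hP1 (fun s => h s * h s) i
        rw [this, hE2]
        refine Finset.sum_congr rfl fun s _ => by ring
      rw [← Finset.add_sum_erase _ _ (Finset.mem_univ i), diag]
      have : ∀ j ∈ Finset.univ.erase i, ∑ ss : Fin N → Ω, (∏ l, P (ss l)) * (h (ss i) * h (ss j))
          = θ ^ 2 := by
        intro j hj
        rw [pair_moment P hP1 h h i j (Ne.symm (Finset.mem_erase.1 hj).1)]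
        ring
      rw [Finset.sum_congr rfl this, Finset.sum_const, Finset.card_erase_of_mem (Finset.mem_univ i)]
      simp only [Finset.card_univ, Fintype.card_fin, nsmul_eq_mul]
      have : ((N - 1 : ℕ) : ℝ) = (N : ℝ) - 1 := by
        have := Nat.cast_sub hN (R := ℝ)
        simpa using this
      rw [this]
    rw [step1, Finset.sum_congr rfl fun i _ => inner i, Finset.sum_const]
    simp only [Finset.card_univ, Fintype.card_fin, nsmul_eq_mul]
    ring
  have expand : ∀ ss : Fin N → Ω,
      (∏ l, P (ss l)) * ((1 / (N : ℝ)) * (∑ i, h (ss i)) - θ) ^ 2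
        = (1 / (N : ℝ)) ^ 2 * ((∏ l, P (ss l)) * (∑ i, h (ss i)) ^ 2)
          - (2 * (1 / (N : ℝ)) * θ) * ((∏ l, P (ss l)) * (∑ i, h (ss i)))
          + θ ^ 2 * (∏ l, P (ss l)) := by
    intro ss; ring
  rw [Finset.sum_congr rfl fun ss _ => expand ss]
  rw [Finset.sum_add_distrib, Finset.sum_sub_distrib, ← Finset.mul_sum, ← Finset.mul_sum,
    ← Finset.mul_sum, T0, T1, T2]
  field_simp
  ring

section Domain
variable {n k : ℕ} {V : Type*} [Fintype V] [Nonempty V] [DecidableEq V]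
  (G : Subgroup (Equiv.Perm (Fin n))) (Xhat : Fin k → Fin n) (xhat : Fin k → V)

lemma orbit_self_mem : Xhat ∈ tupleOrbit G Xhat := by
  refine Finset.mem_filter.2 ⟨Finset.mem_univ _, ⟨1, G.one_mem, ?_⟩⟩
  funext j; simp [tupleAct]

lemma orbit_card_pos : 0 < (tupleOrbit G Xhat).card :=
  Finset.card_pos.2 ⟨Xhat, orbit_self_mem G Xhat⟩

lemma weight_le : ∀ s : Fin n → V,
    orbitHammingWeight G Xhat xhat s ≤ (tupleOrbit G Xhat).card := fun _ =>
  Finset.card_filter_le _ _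

lemma slice_sum_eq (P : (Fin n → V) → ℝ)
    (hPG : ∀ g ∈ G, ∀ s : Fin n → V, P (permAct g s) = P s)
    {A : Fin k → Fin n} (hA : A ∈ tupleOrbit G Xhat) :
    ∑ s : Fin n → V, (if s ∘ A = xhat then P s else 0)
      = ∑ s : Fin n → V, (if s ∘ Xhat = xhat then P s else 0) := by
  obtain ⟨g, hg, hgA⟩ := (Finset.mem_filter.1 hA).2
  have hbij : Function.Bijective (fun t : Fin n → V => permAct g⁻¹ t) := by
    refine Function.bijective_iff_has_inverse.2 ⟨fun t => permAct g t, fun t => ?_, fun t => ?_⟩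
    · funext i; simp [permAct]
    · funext i; simp [permAct]
  refine Fintype.sum_bijective _ hbij _ _ fun t => ?_
  have h1 : (permAct g⁻¹ t) ∘ Xhat = t ∘ A := by
    funext j
    simp [permAct, ← hgA, tupleAct]
  have h2 : P (permAct g⁻¹ t) = P t := hPG g⁻¹ (G.inv_mem hg) t
  rw [h1, h2]

lemma mean_identity (P : (Fin n → V) → ℝ)
    (hPG : ∀ g ∈ G, ∀ s : Fin n → V, P (permAct g s) = P s) :
    ∑ s : Fin n → V, P s * ((orbitHammingWeight G Xhat xhat s : ℝ) /
        ((tupleOrbit G Xhat).card : ℝ))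
      = ∑ s ∈ Finset.univ.filter (fun s : Fin n → V => s ∘ Xhat = xhat), P s := by
  have hM : ((tupleOrbit G Xhat).card : ℝ) ≠ 0 := by
    exact_mod_cast (orbit_card_pos G Xhat).ne'
  have key : ∑ s : Fin n → V, P s * (orbitHammingWeight G Xhat xhat s : ℝ)
      = ((tupleOrbit G Xhat).card : ℝ) *
        ∑ s ∈ Finset.univ.filter (fun s : Fin n → V => s ∘ Xhat = xhat), P s := by
    have hcard : ∀ s : Fin n → V, (orbitHammingWeight G Xhat xhat s : ℝ)
        = ∑ A ∈ tupleOrbit G Xhat, (if s ∘ A = xhat then (1 : ℝ) else 0) := by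
      intro s
      rw [orbitHammingWeight, Finset.card_filter]
      push_cast
      rfl
    calc ∑ s : Fin n → V, P s * (orbitHammingWeight G Xhat xhat s : ℝ)
        = ∑ s : Fin n → V, ∑ A ∈ tupleOrbit G Xhat, (if s ∘ A = xhat then P s else 0) := by
          refine Finset.sum_congr rfl fun s _ => ?_
          rw [hcard s, Finset.mul_sum]
          exact Finset.sum_congr rfl fun A _ => by split <;> simp
      _ = ∑ A ∈ tupleOrbit G Xhat, ∑ s : Fin n → V, (if s ∘ A = xhat then P s else 0) :=
          Finset.sum_comm
      _ = ∑ A ∈ tupleOrbit G Xhat, ∑ s : Fin n → V, (if s ∘ Xhat = xhat then P s else 0) :=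
          Finset.sum_congr rfl fun A hA => slice_sum_eq G Xhat xhat P hPG hA
      _ = ((tupleOrbit G Xhat).card : ℝ) *
            ∑ s ∈ Finset.univ.filter (fun s : Fin n → V => s ∘ Xhat = xhat), P s := by
          rw [Finset.sum_const, ← Finset.sum_filter]
          simp [nsmul_eq_mul]
  have : ∑ s : Fin n → V, P s * ((orbitHammingWeight G Xhat xhat s : ℝ) /
      ((tupleOrbit G Xhat).card : ℝ))
      = (∑ s : Fin n → V, P s * (orbitHammingWeight G Xhat xhat s : ℝ)) /
        ((tupleOrbit G Xhat).card : ℝ) := by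
    rw [Finset.sum_div]
    exact Finset.sum_congr rfl fun s _ => by ring
  rw [this, key]
  field_simp
end Domain

set_option maxHeartbeats 1600000 in
/-- strictness in Theorem 2(b): if some assignment `s` has positive density
and `0 < H(s) < M`, then for every `N ≥ 1` the mean squared error of the Rao-Blackwell
estimator is strictly smaller than that of the standard estimator. -/
theorem rao_blackwell_mse_lt_standard_mse
    (n k : ℕ) (hn : 0 < n) (hk : 0 < k)
    (V : Type*) [Fintype V] [Nonempty V] [DecidableEq V]
    (G : Subgroup (Equiv.Perm (Fin n)))
    (Xhat : Fin k → Fin n) (hX : Function.Injective Xhat)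
    (xhat : Fin k → V)
    (P : (Fin n → V) → ℝ)
    (hP0 : ∀ s, 0 ≤ P s)
    (hP1 : ∑ s : Fin n → V, P s = 1)
    (hPG : ∀ g ∈ G, ∀ s : Fin n → V, P (permAct g s) = P s)
    (hstrict : ∃ s : Fin n → V, 0 < P s ∧ 0 < orbitHammingWeight G Xhat xhat s ∧
      orbitHammingWeight G Xhat xhat s < (tupleOrbit G Xhat).card)
    (N : ℕ) (hN : 1 ≤ N) :
    ∑ ss : Fin N → (Fin n → V),
        (∏ i, P (ss i)) *
          ((1 / (N : ℝ)) * (∑ i, (orbitHammingWeight G Xhat xhat (ss i) : ℝ) /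
              ((tupleOrbit G Xhat).card : ℝ)) -
            ∑ s ∈ Finset.univ.filter (fun s : Fin n → V => s ∘ Xhat = xhat), P s) ^ 2 <
      ∑ ss : Fin N → (Fin n → V),
        (∏ i, P (ss i)) *
          ((1 / (N : ℝ)) * (∑ i, if ss i ∘ Xhat = xhat then (1 : ℝ) else 0) -
            ∑ s ∈ Finset.univ.filter (fun s : Fin n → V => s ∘ Xhat = xhat), P s) ^ 2 := by
  classical
  have hMpos : (0:ℝ) < ((tupleOrbit G Xhat).card : ℝ) := by
    exact_mod_cast orbit_card_pos G Xhat
  set f : (Fin n → V) → ℝ :=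
    fun s => (orbitHammingWeight G Xhat xhat s : ℝ) / ((tupleOrbit G Xhat).card : ℝ) with hf
  set gi : (Fin n → V) → ℝ := fun s => if s ∘ Xhat = xhat then (1:ℝ) else 0 with hgi
  have hfmean : ∑ s : Fin n → V, P s * f s
      = ∑ s ∈ Finset.univ.filter (fun s : Fin n → V => s ∘ Xhat = xhat), P s :=
    mean_identity G Xhat xhat P hPG
  have hgmean : ∑ s : Fin n → V, P s * gi s
      = ∑ s ∈ Finset.univ.filter (fun s : Fin n → V => s ∘ Xhat = xhat), P s := by
    rw [Finset.sum_filter]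
    exact Finset.sum_congr rfl fun s _ => by simp only [hgi]; split <;> simp
  have hL : ∑ ss : Fin N → (Fin n → V),
        (∏ i, P (ss i)) *
          ((1 / (N : ℝ)) * (∑ i, (orbitHammingWeight G Xhat xhat (ss i) : ℝ) /
              ((tupleOrbit G Xhat).card : ℝ)) -
            ∑ s ∈ Finset.univ.filter (fun s : Fin n → V => s ∘ Xhat = xhat), P s) ^ 2
      = (1 / (N : ℝ)) * ((∑ s, P s * f s ^ 2) - (∑ s, P s * f s) ^ 2) := by
    rw [← hfmean]
    exact mse_formula hN P hP1 f
  have hR : ∑ ss : Fin N → (Fin n → V),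
        (∏ i, P (ss i)) *
          ((1 / (N : ℝ)) * (∑ i, if ss i ∘ Xhat = xhat then (1 : ℝ) else 0) -
            ∑ s ∈ Finset.univ.filter (fun s : Fin n → V => s ∘ Xhat = xhat), P s) ^ 2
      = (1 / (N : ℝ)) * ((∑ s, P s * gi s ^ 2) - (∑ s, P s * gi s) ^ 2) := by
    rw [← hgmean]
    exact mse_formula hN P hP1 gi
  rw [hL, hR]
  have hgsq : ∑ s : Fin n → V, P s * gi s ^ 2 = ∑ s : Fin n → V, P s * gi s := by
    refine Finset.sum_congr rfl fun s _ => ?_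
    simp only [hgi]
    split <;> simp
  have hfle : ∀ s : Fin n → V, (0:ℝ) ≤ f s ∧ f s ≤ 1 := by
    intro s
    constructor
    · positivity
    · rw [hf, div_le_one hMpos]
      exact_mod_cast weight_le G Xhat xhat s
  have hstrictsum : ∑ s : Fin n → V, P s * f s ^ 2 < ∑ s : Fin n → V, P s * f s := by
    obtain ⟨s₀, hP₀, hH₀, hH₁⟩ := hstrict
    refine Finset.sum_lt_sum (fun s _ => ?_) ⟨s₀, Finset.mem_univ s₀, ?_⟩
    · obtain ⟨h0, h1⟩ := hfle s
      have : f s ^ 2 ≤ f s := by nlinarith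
      exact mul_le_mul_of_nonneg_left this (hP0 s)
    · have h0 : (0:ℝ) < f s₀ := by
        rw [hf]
        have : (0:ℝ) < (orbitHammingWeight G Xhat xhat s₀ : ℝ) := by exact_mod_cast hH₀
        positivity
      have h1 : f s₀ < 1 := by
        rw [hf, div_lt_one hMpos]
        exact_mod_cast hH₁
      have : f s₀ ^ 2 < f s₀ := by nlinarith
      exact mul_lt_mul_of_pos_left this hP₀
  have hNpos : (0:ℝ) < 1 / (N : ℝ) := by
    have : (0:ℝ) < (N : ℝ) := by exact_mod_cast hN
    positivity
  apply mul_lt_mul_of_pos_left _ hNpos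
  rw [hfmean, hgmean]
  apply sub_lt_sub_right
  calc ∑ s : Fin n → V, P s * f s ^ 2 < ∑ s : Fin n → V, P s * f s := hstrictsum
    _ = ∑ s ∈ Finset.univ.filter (fun s : Fin n → V => s ∘ Xhat = xhat), P s := hfmean
    _ = ∑ s : Fin n → V, P s * gi s := hgmean.symm
    _ = ∑ s : Fin n → V, P s * gi s ^ 2 := hgsq.symm
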